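/- Let Ω = C(ℝ₊, ℝ^d) be the canonical space with canonical filtration F and Wiener measure P, let U be a Polish space, and let ν be a U-valued F-predictable process. Fix t ≥ 0 and w ∈ Ω, and define the shifted control ν^{t,w}_s(ω) := ν_s(w ⊗_t ω) for (s, ω) ∈ ℝ₊ × Ω. Then ν^{t,w} is an F-predictable process and, under P, the σ-algebra σ(ν^{t,w}_s, s ≥ 0) is independent of F_t. -/

import Mathlib

open MeasureTheory ProbabilityTheory
open scoped NNReal

noncomputable section

/-- The canonical space `Ω = C(ℝ₊, ℝ^d)` of continuous paths. -/
abbrev CanonSp (d : ℕ) := C(ℝ≥0, EuclideanSpace ℝ (Fin d))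

/-- The Borel σ-field `𝓕` of the canonical space. -/
instance (d : ℕ) : MeasurableSpace (CanonSp d) := borel _
instance (d : ℕ) : BorelSpace (CanonSp d) := ⟨rfl⟩

/-- The canonical (raw) filtration `F_s = σ(B_u, u ≤ s)` on the canonical space. -/
def canonFil (d : ℕ) : Filtration ℝ≥0 (inferInstance : MeasurableSpace (CanonSp d)) where
  seq s := ⨆ u ∈ Set.Iic s, MeasurableSpace.comap (fun ω : CanonSp d => ω u) inferInstance
  mono' := fun s t hst => biSup_mono fun u (hu : u ≤ s) => hu.trans hst
  le' := fun _s => iSup₂_le fun u _ =>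
    Measurable.comap_le (ContinuousEvalConst.continuous_eval_const u).measurable

/-- The σ-algebra generated by the collection `N^P` of `P`-negligible sets. -/
def nullSigma {α : Type*} {m : MeasurableSpace α} (P : @Measure α m) : MeasurableSpace α :=
  MeasurableSpace.generateFrom {A | ∃ N, MeasurableSet[m] N ∧ P N = 0 ∧ A ⊆ N}

/-- The `P`-augmented canonical filtration `F^P_s := F_s ∨ N^P`. -/
def augFil (d : ℕ) (P : Measure (CanonSp d)) :
    Filtration ℝ≥0 (⊤ : MeasurableSpace (CanonSp d)) where
  seq s := canonFil d s ⊔ nullSigma P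
  mono' := fun s t hst => sup_le_sup_right ((canonFil d).mono hst) _
  le' := fun _ => le_top

/-- The stopped path `[ω]_t = (ω(t ∧ s))_{s ≥ 0}`. -/
def stoppedPath {d : ℕ} (ω : CanonSp d) (t : ℝ≥0) : CanonSp d :=
  ω.comp ⟨fun s => min t s, continuous_const.min continuous_id⟩

/-- The concatenated path `w ⊗_t ω`, equal to `w` on `[0, t]` and to
`s ↦ w(t) + ω(s) - ω(t)` on `[t, ∞)`. -/
def concatPath {d : ℕ} (w : CanonSp d) (t : ℝ≥0) (ω : CanonSp d) : CanonSp d :=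
  ⟨fun s => w (min s t) + ω (max s t) - ω t, by
    refine Continuous.sub (Continuous.add ?_ ?_) continuous_const
    · exact w.continuous.comp (continuous_id.min continuous_const)
    · exact ω.continuous.comp (continuous_id.max continuous_const)⟩

/-- `P` is the Wiener measure on the canonical space: it is a probability measure,
the canonical process starts at `0` a.s., its increments after time `s` are
independent of `F_s`, and the increment `B_t - B_s` is a `d`-dimensional centered
Gaussian vector of covariance `(t-s) Id`. -/
def IsWienerMeasure (d : ℕ) (P : Measure (CanonSp d)) : Prop :=
  IsProbabilityMeasure P ∧
  (∀ᵐ ω ∂P, ω 0 = 0) ∧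
  (∀ s t : ℝ≥0, s ≤ t →
    Indep (MeasurableSpace.comap (fun ω : CanonSp d => ω t - ω s) inferInstance)
      (canonFil d s) P) ∧
  (∀ s t : ℝ≥0, s ≤ t →
    P.map (fun ω : CanonSp d => (EuclideanSpace.equiv (Fin d) ℝ) (ω t - ω s)) =
      Measure.pi fun _ : Fin d => gaussianReal 0 (t - s))

/-- The predictable σ-algebra on `ℝ₊ × α` associated with a filtration
`G = (G_s)`: it is generated by the sets `{0} × A` with `A ∈ G_0` and
`(u, v] × A` with `u < v` and `A ∈ G_u`. -/
def predictableSigma {α : Type*} (G : ℝ≥0 → MeasurableSpace α) :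
    MeasurableSpace (ℝ≥0 × α) :=
  MeasurableSpace.generateFrom
    ({S | ∃ A : Set α, MeasurableSet[G 0] A ∧ S = ({0} : Set ℝ≥0) ×ˢ A} ∪
     {S | ∃ (u v : ℝ≥0) (A : Set α), u < v ∧ MeasurableSet[G u] A ∧ S = Set.Ioc u v ×ˢ A})

lemma canonFil_apply (d : ℕ) (u : ℝ≥0) :
    canonFil d u = ⨆ r ∈ Set.Iic u,
      MeasurableSpace.comap (fun ω : CanonSp d => ω r) inferInstance := rfl

lemma eval_measurable_canonFil {d : ℕ} {r u : ℝ≥0} (hr : r ≤ u) :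
    Measurable[canonFil d u] (fun ω : CanonSp d => ω r) :=
  Measurable.of_comap_le (by
    rw [canonFil_apply]
    exact le_biSup (fun v => MeasurableSpace.comap (fun ω : CanonSp d => ω v) inferInstance)
      (Set.mem_Iic.mpr hr))

lemma concat_eval {d : ℕ} (w : CanonSp d) (t : ℝ≥0) (ω : CanonSp d) (r : ℝ≥0) :
    concatPath w t ω r = w (min r t) + ω (max r t) - ω t := rfl

lemma concat_eval_measurable {d : ℕ} (w : CanonSp d) (t : ℝ≥0) {r u : ℝ≥0} (hr : r ≤ u) :
    Measurable[canonFil d u] (fun ω : CanonSp d => concatPath w t ω r) := by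
  simp only [concat_eval]
  rcases le_total t u with htu | hut
  · exact (measurable_const.add (eval_measurable_canonFil (max_le hr htu))).sub
      (eval_measurable_canonFil htu)
  · have hrt : r ≤ t := hr.trans hut
    have : (fun ω : CanonSp d => w (min r t) + ω (max r t) - ω t)
        = fun _ => w (min r t) := by
      funext ω
      rw [max_eq_right hrt, add_sub_cancel_right]
    rw [this]
    exact measurable_const

lemma comap_concat_le {d : ℕ} (w : CanonSp d) (t u : ℝ≥0) :
    MeasurableSpace.comap (concatPath w t) (canonFil d u) ≤ canonFil d u := by
  rw [canonFil_apply]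
  simp only [MeasurableSpace.comap_iSup, MeasurableSpace.comap_comp]
  refine iSup₂_le fun r hr => ?_
  exact Measurable.comap_le (concat_eval_measurable w t (Set.mem_Iic.mp hr))

lemma measurable_slice {α : Type*} {G : ℝ≥0 → MeasurableSpace α} (hG : Monotone G)
    {U : Type*} [MeasurableSpace U] {f : ℝ≥0 × α → U}
    (hf : Measurable[predictableSigma G] f) (s : ℝ≥0) :
    Measurable[G s] fun a => f (s, a) := by
  have hmk : Measurable[G s, predictableSigma G] (fun a : α => ((s, a) : ℝ≥0 × α)) := by
    apply @measurable_generateFrom _ _ (G s)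
    rintro S (⟨A, hA, rfl⟩ | ⟨u, v, A, huv, hA, rfl⟩)
    · by_cases hs : s ∈ ({0} : Set ℝ≥0)
      · have hpre : (fun a : α => ((s, a) : ℝ≥0 × α)) ⁻¹' (({0} : Set ℝ≥0) ×ˢ A) = A := by
          ext a; simp [show s = 0 from hs]
        rw [hpre]
        exact hG (zero_le : 0 ≤ s) _ hA
      · have hpre : (fun a : α => ((s, a) : ℝ≥0 × α)) ⁻¹' (({0} : Set ℝ≥0) ×ˢ A) = ∅ := by
          ext a; simp [eq_comm, show ¬ s = 0 from hs]
        rw [hpre]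
        exact @MeasurableSet.empty _ (G s)
    · by_cases hs : s ∈ Set.Ioc u v
      · have hpre : (fun a : α => ((s, a) : ℝ≥0 × α)) ⁻¹' (Set.Ioc u v ×ˢ A) = A := by
          ext a; simp [hs]
        rw [hpre]
        exact hG hs.1.le _ hA
      · have hpre : (fun a : α => ((s, a) : ℝ≥0 × α)) ⁻¹' (Set.Ioc u v ×ˢ A) = ∅ := by
          ext a; simp [hs]
        rw [hpre]
        exact @MeasurableSet.empty _ (G s)
  exact hf.comp hmk

lemma indep_sup_aux {Ω : Type*} {mΩ : MeasurableSpace Ω} {μ : Measure Ω} [IsProbabilityMeasure μ]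
    {m₁ m₂ m₃ m' : MeasurableSpace Ω} (h₁ : m₁ ≤ mΩ) (h₂ : m₂ ≤ mΩ) (h₃ : m₃ ≤ mΩ)
    (h2' : m₂ ≤ m') (h3' : m₃ ≤ m')
    (hInd1 : Indep m₁ m' μ) (hInd2 : Indep m₂ m₃ μ) :
    Indep (m₁ ⊔ m₂) m₃ μ := by
  rw [Indep_iff] at hInd1 hInd2
  have hgen : m₁ ⊔ m₂ = MeasurableSpace.generateFrom
      {s | ∃ s₁ s₂, MeasurableSet[m₁] s₁ ∧ MeasurableSet[m₂] s₂ ∧ s = s₁ ∩ s₂} := by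
    refine le_antisymm (sup_le ?_ ?_) (MeasurableSpace.generateFrom_le ?_)
    · intro s hs
      exact MeasurableSpace.measurableSet_generateFrom
        ⟨s, Set.univ, hs, MeasurableSet.univ, (Set.inter_univ s).symm⟩
    · intro s hs
      exact MeasurableSpace.measurableSet_generateFrom
        ⟨Set.univ, s, MeasurableSet.univ, hs, (Set.univ_inter s).symm⟩
    · rintro s ⟨s₁, s₂, hs₁, hs₂, rfl⟩
      exact ((le_sup_left : m₁ ≤ m₁ ⊔ m₂) _ hs₁).inter ((le_sup_right : m₂ ≤ m₁ ⊔ m₂) _ hs₂)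
  refine IndepSets.indep (sup_le h₁ h₂) h₃ ?_ (@MeasurableSpace.isPiSystem_measurableSet Ω m₃) hgen
    (@MeasurableSpace.generateFrom_measurableSet Ω m₃).symm ?_
  · rintro s ⟨s₁, s₂, hs₁, hs₂, rfl⟩ u ⟨u₁, u₂, hu₁, hu₂, rfl⟩ _
    exact ⟨s₁ ∩ u₁, s₂ ∩ u₂, hs₁.inter hu₁, hs₂.inter hu₂, Set.inter_inter_inter_comm _ _ _ _⟩
  · rw [IndepSets_iff]
    rintro t1 t2 ⟨s₁, s₂, hs₁, hs₂, rfl⟩ ht2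
    rw [Set.inter_assoc, hInd1 s₁ (s₂ ∩ t2) hs₁ ((h2' _ hs₂).inter (h3' _ ht2)),
        hInd2 s₂ t2 hs₂ ht2, hInd1 s₁ s₂ hs₁ (h2' _ hs₂), mul_assoc]

lemma indep_mono {Ω : Type*} {mΩ : MeasurableSpace Ω} {μ : Measure Ω}
    {m₁ m₂ m₁' m₂' : MeasurableSpace Ω} (h : Indep m₁ m₂ μ)
    (h1 : m₁' ≤ m₁) (h2 : m₂' ≤ m₂) : Indep m₁' m₂' μ := by
  rw [Indep_iff] at h ⊢
  exact fun t1 t2 ht1 ht2 => h t1 t2 (h1 _ ht1) (h2 _ ht2)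

def mg (d : ℕ) (t r : ℝ≥0) : MeasurableSpace (CanonSp d) :=
  MeasurableSpace.comap (fun ω : CanonSp d => ω (max r t) - ω t) inferInstance

lemma mg_le (d : ℕ) (t r : ℝ≥0) : mg d t r ≤ (inferInstance : MeasurableSpace (CanonSp d)) :=
  Measurable.comap_le (((ContinuousEvalConst.continuous_eval_const _).sub
    (ContinuousEvalConst.continuous_eval_const _)).measurable)

lemma mg_le_canonFil {d : ℕ} {t r u : ℝ≥0} (hr : max r t ≤ u) (ht : t ≤ u) :
    mg d t r ≤ canonFil d u :=
  Measurable.comap_le ((eval_measurable_canonFil hr).sub (eval_measurable_canonFil ht))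

lemma key_finset {d : ℕ} {P : Measure (CanonSp d)} (hP : IsWienerMeasure d P) (t : ℝ≥0) :
    ∀ (n : ℕ) (S : Finset ℝ≥0), S.card = n →
      Indep (⨆ r ∈ S, mg d t r) (canonFil d t) P := by
  haveI := hP.1
  intro n
  induction n with
  | zero =>
    intro S hS
    rw [Finset.card_eq_zero] at hS
    subst hS
    simp only [Finset.notMem_empty, iSup_false, iSup_bot]
    exact indep_bot_left _
  | succ n ih =>
    intro S hS
    have hne : S.Nonempty := Finset.card_pos.mp (by rw [hS]; exact Nat.succ_pos n)
    set m := S.max' hne with hmdef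
    have hmS : m ∈ S := S.max'_mem hne
    have hins : insert m (S.erase m) = S := Finset.insert_erase hmS
    have hcard : (S.erase m).card = n := by
      rw [Finset.card_erase_of_mem hmS, hS]
      exact Nat.succ_sub_one n
    have hK := ih (S.erase m) hcard
    by_cases hne' : (S.erase m).Nonempty
    · set m'' := (S.erase m).max' hne' with hm''def
      have hm'' : m'' ≤ m := S.le_max' _ (Finset.mem_of_mem_erase ((S.erase m).max'_mem hne'))
      have hts' : t ≤ max m'' t := le_max_right _ _
      have hs'm : max m'' t ≤ max m t := max_le (hm''.trans (le_max_left m t)) (le_max_right m t)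
      have hKle : (⨆ r ∈ S.erase m, mg d t r) ≤ canonFil d (max m'' t) :=
        iSup₂_le fun r hr => mg_le_canonFil
          (max_le (((S.erase m).le_max' r hr).trans (le_max_left _ _)) hts') hts'
      have hInc : Indep
          (MeasurableSpace.comap (fun ω : CanonSp d => ω (max m t) - ω (max m'' t))
            inferInstance)
          (canonFil d (max m'' t)) P := hP.2.2.1 _ _ hs'm
      have hmgm : mg d t m ≤
          (MeasurableSpace.comap (fun ω : CanonSp d => ω (max m t) - ω (max m'' t))
            inferInstance) ⊔ (⨆ r ∈ S.erase m, mg d t r) := by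
        refine Measurable.comap_le ?_
        have heq : (fun ω : CanonSp d => ω (max m t) - ω t)
            = fun ω => (ω (max m t) - ω (max m'' t)) + (ω (max m'' t) - ω t) := by
          funext ω; rw [sub_add_sub_cancel]
        rw [heq]
        refine Measurable.add ?_ ?_
        · exact Measurable.of_comap_le le_sup_left
        · refine Measurable.of_comap_le (le_trans ?_ le_sup_right)
          exact le_biSup (mg d t) ((S.erase m).max'_mem hne')
      have hIndSup : Indep
          ((MeasurableSpace.comap (fun ω : CanonSp d => ω (max m t) - ω (max m'' t))
            inferInstance) ⊔ (⨆ r ∈ S.erase m, mg d t r)) (canonFil d t) P := by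
        refine indep_sup_aux ?_ ?_ ((canonFil d).le t) hKle ((canonFil d).mono hts') hInc hK
        · exact Measurable.comap_le ((ContinuousEvalConst.continuous_eval_const _).sub
            (ContinuousEvalConst.continuous_eval_const _)).measurable
        · exact hKle.trans ((canonFil d).le _)
      refine indep_mono hIndSup ?_ le_rfl
      conv_lhs => rw [← hins, Finset.iSup_insert]
      exact sup_le hmgm le_sup_right
    · have hempty : S.erase m = ∅ := Finset.not_nonempty_iff_eq_empty.mp hne'
      have hsup : (⨆ r ∈ S, mg d t r) = mg d t m := by
        rw [← hins, hempty, Finset.iSup_insert]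
        simp
      rw [hsup]
      exact hP.2.2.1 t (max m t) (le_max_right m t)

lemma indep_increments {d : ℕ} {P : Measure (CanonSp d)} (hP : IsWienerMeasure d P) (t : ℝ≥0) :
    Indep (⨆ r : ℝ≥0, mg d t r) (canonFil d t) P := by
  haveI := hP.1
  have hdir : Directed (· ≤ ·) (fun S : Finset ℝ≥0 => ⨆ r ∈ S, mg d t r) :=
    Monotone.directed_le fun S T hST => biSup_mono fun r hr => Finset.le_iff_subset.mp hST hr
  have h := indep_iSup_of_directed_le
    (fun S : Finset ℝ≥0 => key_finset hP t S.card S rfl)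
    (fun S => iSup₂_le fun r _ => mg_le d t r) ((canonFil d).le t) hdir
  have heq : (⨆ S : Finset ℝ≥0, ⨆ r ∈ S, mg d t r) = ⨆ r : ℝ≥0, mg d t r := by
    refine le_antisymm (iSup_le fun S => iSup₂_le fun r _ => le_iSup (mg d t) r)
      (iSup_le fun r => ?_)
    refine le_trans ?_ (le_iSup (fun S : Finset ℝ≥0 => ⨆ r ∈ S, mg d t r) {r})
    exact le_biSup (mg d t) (Finset.mem_singleton_self r)
  rwa [heq] at h

/-- On the canonical space with Wiener measure `P`, let `ν` be a
`U`-valued `F`-predictable control (`U` Polish) and, for `t ≥ 0` and `w ∈ Ω`, let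
`ν^{t,w}_s(ω) := ν_s(w ⊗_t ω)` be the shifted control. Then `ν^{t,w}` is
`F`-predictable and the σ-algebra `σ(ν^{t,w}_s, s ≥ 0)` is independent of `F_t`
under `P`. -/
theorem shifted_control_predictable_and_indep {d : ℕ}
    (P : Measure (CanonSp d)) (hP : IsWienerMeasure d P)
    {U : Type*} [MeasurableSpace U] [TopologicalSpace U] [PolishSpace U] [BorelSpace U]
    (ν : ℝ≥0 → CanonSp d → U)
    (hν : Measurable[predictableSigma (fun s => canonFil d s)]
      (fun p : ℝ≥0 × CanonSp d => ν p.1 p.2))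
    (t : ℝ≥0) (w : CanonSp d) :
    Measurable[predictableSigma (fun s => canonFil d s)]
      (fun p : ℝ≥0 × CanonSp d => ν p.1 (concatPath w t p.2)) ∧
    ProbabilityTheory.Indep
      (⨆ s : ℝ≥0, MeasurableSpace.comap (fun ω : CanonSp d => ν s (concatPath w t ω))
        inferInstance)
      (canonFil d t) P := by
  haveI := hP.1
  constructor
  · have hΦ : Measurable[predictableSigma (fun s => canonFil d s),
        predictableSigma (fun s => canonFil d s)]
        (fun p : ℝ≥0 × CanonSp d => ((p.1, concatPath w t p.2) : ℝ≥0 × CanonSp d)) := by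
      apply @measurable_generateFrom _ _ (predictableSigma (fun s => canonFil d s))
      rintro S (⟨A, hA, rfl⟩ | ⟨u, v, A, huv, hA, rfl⟩)
      · have hpre : (fun p : ℝ≥0 × CanonSp d =>
            ((p.1, concatPath w t p.2) : ℝ≥0 × CanonSp d)) ⁻¹' (({0} : Set ℝ≥0) ×ˢ A)
            = ({0} : Set ℝ≥0) ×ˢ (concatPath w t ⁻¹' A) := rfl
        rw [hpre]
        exact MeasurableSpace.measurableSet_generateFrom
          (Or.inl ⟨concatPath w t ⁻¹' A, comap_concat_le w t 0 _ ⟨A, hA, rfl⟩, rfl⟩)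
      · have hpre : (fun p : ℝ≥0 × CanonSp d =>
            ((p.1, concatPath w t p.2) : ℝ≥0 × CanonSp d)) ⁻¹' (Set.Ioc u v ×ˢ A)
            = Set.Ioc u v ×ˢ (concatPath w t ⁻¹' A) := rfl
        rw [hpre]
        exact MeasurableSpace.measurableSet_generateFrom
          (Or.inr ⟨u, v, concatPath w t ⁻¹' A, huv, comap_concat_le w t u _ ⟨A, hA, rfl⟩, rfl⟩)
    exact hν.comp hΦ
  · have hGH : (⨆ s : ℝ≥0, MeasurableSpace.comap
        (fun ω : CanonSp d => ν s (concatPath w t ω)) inferInstance)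
        ≤ ⨆ r : ℝ≥0, mg d t r := by
      refine iSup_le fun s => ?_
      have hνs : MeasurableSpace.comap (ν s) inferInstance ≤ canonFil d s :=
        Measurable.comap_le (measurable_slice (fun _ _ h => (canonFil d).mono h) hν s)
      have h1 : MeasurableSpace.comap (fun ω : CanonSp d => ν s (concatPath w t ω))
          (inferInstance : MeasurableSpace U)
          = MeasurableSpace.comap (concatPath w t)
            (MeasurableSpace.comap (ν s) inferInstance) :=
        (MeasurableSpace.comap_comp).symm
      rw [h1]
      refine le_trans (MeasurableSpace.comap_mono hνs) ?_
      rw [canonFil_apply]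
      simp only [MeasurableSpace.comap_iSup, MeasurableSpace.comap_comp]
      refine iSup₂_le fun r _ => ?_
      have heq : ((fun ω : CanonSp d => ω r) ∘ concatPath w t)
          = (fun x : EuclideanSpace ℝ (Fin d) => w (min r t) + x)
            ∘ (fun ω : CanonSp d => ω (max r t) - ω t) := by
        funext ω
        simp only [Function.comp_apply, concat_eval, add_sub_assoc]
      rw [heq, ← MeasurableSpace.comap_comp]
      refine le_trans (MeasurableSpace.comap_mono
        (Measurable.comap_le (measurable_const.add measurable_id))) ?_
      exact le_iSup (mg d t) r
    exact indep_mono (indep_increments hP t) hGH le_rfl
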